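/- Let G = ([n], E) be a finite simple graph and k a field. Then the set of exponent vectors { a ∈ ℕ^n : x^a ∉ T_G } (the standard monomials of the tree ideal T_G) is finite, and its cardinality equals the number of spanning trees of the cone graph G_r, i.e. the number of subgraphs of G_r that are trees containing every vertex of G_r. (Equivalently, the standard monomials of T_G are equinumerous with the rooted spanning forests of G.) -/

import Mathlib

open MvPolynomial

/-- `dout_σ(i)`: the number of neighbors of `i` outside of `σ`. -/
noncomputable def doutDeg {n : ℕ} (G : SimpleGraph (Fin n)) (σ : Finset (Fin n)) (i : Fin n) :
    ℕ :=
  {j : Fin n | j ∉ σ ∧ G.Adj i j}.ncard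

/-- The tree ideal of `G`, generated by the monomials `∏_{i∈σ} x_i ^ (dout_σ(i)+1)`
over nonempty `σ ⊆ [n]` with `G[σ]` connected. -/
noncomputable def treeIdeal (n : ℕ) (G : SimpleGraph (Fin n)) (K : Type*) [Field K] :
    Ideal (MvPolynomial (Fin n) K) :=
  Ideal.span {f | ∃ σ : Finset (Fin n), σ.Nonempty ∧
    (G.induce (↑σ : Set (Fin n))).Connected ∧
    f = ∏ i ∈ σ, (X i : MvPolynomial (Fin n) K) ^ (doutDeg G σ i + 1)}

/-- The cone graph `G_r` of `G`: a new vertex `r` (encoded as `none`) is joined to all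
vertices of `G` (encoded as `some i`), keeping all edges of `G`. -/
def coneGraph {n : ℕ} (G : SimpleGraph (Fin n)) : SimpleGraph (Option (Fin n)) :=
  SimpleGraph.fromRel (fun u v => u = none ∨ ∃ i j, u = some i ∧ v = some j ∧ G.Adj i j)


open Finset
open scoped Classical

/-- A rooted parent function on `V` with root `r`. -/
structure PFn (V : Type*) (r : V) where
  p : V → V
  root : p r = r
  nroot : ∀ v, v ≠ r → p v ≠ v
  acyc : ∀ v, ∃ k, p^[k] v = r

namespace PFn

variable {V : Type*} {r : V} (f : PFn V r)

@[ext] lemma ext {f g : PFn V r} (h : f.p = g.p) : f = g := by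
  cases f; cases g; simpa using h

/-- Height: distance to the root along parent pointers. -/
noncomputable def ht (v : V) : ℕ := Nat.find (f.acyc v)

lemma iterate_ht (v : V) : f.p^[f.ht v] v = r := Nat.find_spec (f.acyc v)

lemma ht_eq_zero_iff (v : V) : f.ht v = 0 ↔ v = r := by
  constructor
  · intro h; have := f.iterate_ht v; rwa [h, Function.iterate_zero_apply] at this
  · rintro rfl
    exact (Nat.find_eq_zero (f.acyc _)).2 (by simp)

lemma ht_p (v : V) (hv : v ≠ r) : f.ht (f.p v) + 1 = f.ht v := by
  have h0 : f.ht v ≠ 0 := fun h => hv ((f.ht_eq_zero_iff v).1 h)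
  have h1 : f.p^[f.ht v - 1] (f.p v) = r := by
    rw [← Function.iterate_succ_apply, Nat.succ_eq_add_one, Nat.sub_add_cancel (Nat.one_le_iff_ne_zero.2 h0)]
    exact f.iterate_ht v
  have hle : f.ht (f.p v) ≤ f.ht v - 1 := Nat.find_min' _ h1
  have hge : f.ht v ≤ f.ht (f.p v) + 1 := by
    apply Nat.find_min' _
    rw [Function.iterate_succ_apply]
    exact f.iterate_ht (f.p v)
  omega

lemma ht_p_lt (v : V) (hv : v ≠ r) : f.ht (f.p v) < f.ht v := by
  have := f.ht_p v hv; omega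

end PFn

section Burning

variable {V : Type*} [Fintype V] [DecidableEq V]

open Classical in
/-- The set of burnable vertices. -/
noncomputable def nxtSet (ok : V → Finset V → Prop) (B : Finset V) : Finset V :=
  Finset.univ.filter (fun i => i ∉ B ∧ ok i B)

/-- One burning step: add the chosen burnable vertex, if any. -/
noncomputable def stepB (ok : V → Finset V → Prop) (B : Finset V) : Finset V :=
  if h : (nxtSet ok B).Nonempty then insert h.choose B else B

/-- The burnt set after `t` steps. -/
noncomputable def burn (ok : V → Finset V → Prop) (r : V) (t : ℕ) : Finset V :=
  (stepB ok)^[t] {r}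

variable {ok : V → Finset V → Prop} {r : V}

lemma mem_nxtSet {i : V} {B : Finset V} : i ∈ nxtSet ok B ↔ i ∉ B ∧ ok i B := by
  classical simp [nxtSet]

lemma burn_zero : burn ok r 0 = {r} := rfl

lemma burn_succ (t : ℕ) : burn ok r (t + 1) = stepB ok (burn ok r t) :=
  Function.iterate_succ_apply' _ _ _

lemma subset_stepB (B : Finset V) : B ⊆ stepB ok B := by
  unfold stepB; split
  · exact Finset.subset_insert _ _
  · exact Finset.Subset.refl B

lemma burn_mono : Monotone (burn ok r) := by
  apply monotone_nat_of_le_succ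
  intro t; rw [burn_succ]; exact subset_stepB _

lemma root_mem_burn (t : ℕ) : r ∈ burn ok r t :=
  burn_mono (Nat.zero_le t) (by simp [burn_zero])

lemma stepB_of_nonempty {B : Finset V} (h : (nxtSet ok B).Nonempty) :
    stepB ok B = insert h.choose B := by
  unfold stepB; rw [dif_pos h]

lemma choose_not_mem {B : Finset V} (h : (nxtSet ok B).Nonempty) : h.choose ∉ B :=
  (mem_nxtSet.1 h.choose_spec).1

lemma choose_ok {B : Finset V} (h : (nxtSet ok B).Nonempty) : ok h.choose B :=
  (mem_nxtSet.1 h.choose_spec).2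

/-- Coverage condition: as long as not everything is burnt, something is burnable. -/
def Covers (ok : V → Finset V → Prop) (r : V) : Prop :=
  ∀ B : Finset V, r ∈ B → B ≠ Finset.univ → (nxtSet ok B).Nonempty

lemma burn_card (h : Covers ok r) (t : ℕ) :
    burn ok r t = Finset.univ ∨ (burn ok r t).card = t + 1 := by
  induction t with
  | zero => right; simp [burn_zero]
  | succ t ih =>
    by_cases h2 : burn ok r t = Finset.univ
    · left
      rw [burn_succ]
      exact Finset.univ_subset_iff.1 (h2 ▸ subset_stepB _)
    · rcases ih with h1 | h1
      · exact absurd h1 h2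
      right
      have hne := h _ (root_mem_burn t) h2
      rw [burn_succ, stepB_of_nonempty hne,
        Finset.card_insert_of_notMem (choose_not_mem hne), h1]

lemma burn_covers (h : Covers ok r) (v : V) : ∃ t, v ∈ burn ok r t := by
  refine ⟨Fintype.card V, ?_⟩
  rcases burn_card h (Fintype.card V) with h1 | h1
  · simp [h1]
  · have : (burn ok r (Fintype.card V)).card ≤ Fintype.card V := Finset.card_le_univ _
    omega

/-- Burning time of a vertex. -/
noncomputable def btime (ok : V → Finset V → Prop) (r : V) (h : Covers ok r) (v : V) : ℕ :=
  Nat.find (burn_covers h v)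

variable (hcov : Covers ok r)

lemma mem_burn_iff_btime {v : V} {t : ℕ} : v ∈ burn ok r t ↔ btime ok r hcov v ≤ t := by
  constructor
  · intro hv; exact Nat.find_min' _ hv
  · intro hv; exact burn_mono hv (Nat.find_spec (burn_covers hcov v))

lemma btime_root : btime ok r hcov r = 0 := by
  have := (mem_burn_iff_btime hcov (v := r) (t := 0)).1 (root_mem_burn 0)
  omega

lemma btime_eq_zero_iff {v : V} : btime ok r hcov v = 0 ↔ v = r := by
  constructor
  · intro h
    have : v ∈ burn ok r 0 := (mem_burn_iff_btime hcov).2 (by omega)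
    simpa [burn_zero] using this
  · rintro rfl; exact btime_root hcov

lemma burn_eq_filter (t : ℕ) :
    burn ok r t = Finset.univ.filter (fun v => btime ok r hcov v ≤ t) := by
  classical
  ext v; simp [mem_burn_iff_btime hcov]

lemma btime_mem_succ {v : V} (h : btime ok r hcov v ≠ 0) :
    v ∈ burn ok r (btime ok r hcov v) ∧ v ∉ burn ok r (btime ok r hcov v - 1) := by
  constructor
  · exact (mem_burn_iff_btime hcov).2 le_rfl
  · intro hv
    have := (mem_burn_iff_btime hcov).1 hv
    omega

/-- At its burning step, a vertex was `ok`. -/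
lemma btime_ok {v : V} (h : btime ok r hcov v ≠ 0) :
    ok v (burn ok r (btime ok r hcov v - 1)) := by
  set t := btime ok r hcov v with ht
  have h1 : v ∈ burn ok r t := (btime_mem_succ hcov h).1
  have h2 : v ∉ burn ok r (t - 1) := (btime_mem_succ hcov h).2
  have hne : (nxtSet ok (burn ok r (t-1))).Nonempty :=
    hcov _ (root_mem_burn _) (fun hu => (h2 (hu ▸ Finset.mem_univ v)))
  have hstep : burn ok r t = insert hne.choose (burn ok r (t-1)) := by
    conv_lhs => rw [show t = (t-1) + 1 by omega]
    rw [burn_succ, stepB_of_nonempty hne]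
  rw [hstep] at h1
  rcases Finset.mem_insert.1 h1 with h1 | h1
  · exact h1 ▸ choose_ok hne
  · exact absurd h1 h2

lemma btime_injective : Function.Injective (btime ok r hcov) := by
  intro v w hvw
  by_cases hv : btime ok r hcov v = 0
  · have hw : btime ok r hcov w = 0 := hvw ▸ hv
    rw [(btime_eq_zero_iff hcov).1 hv, (btime_eq_zero_iff hcov).1 hw]
  · have hw : btime ok r hcov w ≠ 0 := hvw ▸ hv
    set t := btime ok r hcov v with htdef
    have h1 : v ∈ burn ok r t := (btime_mem_succ hcov hv).1
    have h2 : v ∉ burn ok r (t - 1) := (btime_mem_succ hcov hv).2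
    have h3 : w ∈ burn ok r t := by rw [show t = btime ok r hcov w from hvw]; exact (btime_mem_succ hcov hw).1
    have h4 : w ∉ burn ok r (t - 1) := by rw [show t = btime ok r hcov w from hvw]; exact (btime_mem_succ hcov hw).2
    have hne : (nxtSet ok (burn ok r (t-1))).Nonempty :=
      hcov _ (root_mem_burn _) (fun hu => (h2 (hu ▸ Finset.mem_univ v)))
    have hstep : burn ok r t = insert hne.choose (burn ok r (t-1)) := by
      conv_lhs => rw [show t = (t-1) + 1 by omega]
      rw [burn_succ, stepB_of_nonempty hne]
    rw [hstep] at h1 h3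
    have e1 : v = hne.choose := by
      rcases Finset.mem_insert.1 h1 with h | h
      · exact h
      · exact absurd h h2
    have e2 : w = hne.choose := by
      rcases Finset.mem_insert.1 h3 with h | h
      · exact h
      · exact absurd h h4
    rw [e1, e2]

/-- If two `ok` predicates agree along the burn sequence of the first, the sequences agree. -/
lemma burn_congr {ok' : V → Finset V → Prop}
    (h : ∀ t i, i ∉ burn ok r t → (ok i (burn ok r t) ↔ ok' i (burn ok r t))) :
    ∀ t, burn ok' r t = burn ok r t := by
  intro t
  induction t with
  | zero => rfl
  | succ t ih =>
    rw [burn_succ, burn_succ, ih]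
    have hset : nxtSet ok' (burn ok r t) = nxtSet ok (burn ok r t) := by
      classical
      ext i
      simp only [mem_nxtSet]
      constructor
      · rintro ⟨h1, h2⟩; exact ⟨h1, (h t i h1).2 h2⟩
      · rintro ⟨h1, h2⟩; exact ⟨h1, (h t i h1).1 h2⟩
    unfold stepB
    rw [hset]

end Burning
section Selection

variable {V : Type*} [Fintype V] [DecidableEq V]

lemma count_strictMonoOn {S : Finset V} {τ : V → ℕ}
    {j j' : V} (hj : j ∈ S) (hτjj : τ j < τ j') :
    (S.filter (fun k => τ k < τ j)).card < (S.filter (fun k => τ k < τ j')).card := by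
  apply Finset.card_lt_card
  rw [Finset.ssubset_iff_of_subset]
  · exact ⟨j, Finset.mem_filter.2 ⟨hj, hτjj⟩, by simp⟩
  · intro k hk
    rw [Finset.mem_filter] at hk ⊢
    exact ⟨hk.1, hk.2.trans hτjj⟩

lemma exists_unique_count {S : Finset V} {τ : V → ℕ} (hτ : Function.Injective τ) {m : ℕ}
    (hm : m < S.card) :
    ∃! j, j ∈ S ∧ (S.filter (fun k => τ k < τ j)).card = m := by
  classical
  set g : V → ℕ := fun j => (S.filter (fun k => τ k < τ j)).card with hg
  have hinj : Set.InjOn g S := by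
    intro j hj j' hj' hjj
    by_contra hne
    rcases Nat.lt_or_ge (τ j) (τ j') with h | h
    · exact absurd hjj (Nat.ne_of_lt (count_strictMonoOn hj h))
    · rcases Nat.lt_or_ge (τ j') (τ j) with h' | h'
      · exact absurd hjj.symm (Nat.ne_of_lt (count_strictMonoOn hj' h'))
      · exact hne (hτ (le_antisymm h' h))
  have hsub : S.image g ⊆ Finset.range S.card := by
    intro m' hm'
    rcases Finset.mem_image.1 hm' with ⟨j, hj, rfl⟩
    rw [Finset.mem_range]
    have : S.filter (fun k => τ k < τ j) ⊆ S.erase j := by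
      intro k hk
      rw [Finset.mem_filter] at hk
      rw [Finset.mem_erase]
      exact ⟨fun h => by simp [h] at hk, hk.1⟩
    calc g j ≤ (S.erase j).card := Finset.card_le_card this
      _ < S.card := Finset.card_erase_lt_of_mem hj
  have himg : S.image g = Finset.range S.card := by
    apply Finset.eq_of_subset_of_card_le hsub
    rw [Finset.card_range, Finset.card_image_of_injOn hinj]
  have hmem : m ∈ S.image g := by rw [himg, Finset.mem_range]; exact hm
  rcases Finset.mem_image.1 hmem with ⟨j, hj, hjm⟩
  refine ⟨j, ⟨hj, hjm⟩, ?_⟩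
  rintro j' ⟨hj', hj'm⟩
  exact hinj hj' hj (hj'm.trans hjm.symm)

lemma count_lt_iff {τ : V → ℕ} {N : Finset V} {j : V} (hj : j ∈ N) (t : ℕ) :
    (N.filter (fun k => τ k < τ j)).card < (N.filter (fun k => τ k ≤ t)).card ↔ τ j ≤ t := by
  classical
  constructor
  · intro h
    by_contra ht
    push_neg at ht
    have : N.filter (fun k => τ k ≤ t) ⊆ N.filter (fun k => τ k < τ j) := by
      intro k hk
      rw [Finset.mem_filter] at hk ⊢
      exact ⟨hk.1, lt_of_le_of_lt hk.2 ht⟩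
    exact absurd (Finset.card_le_card this) (by omega)
  · intro h
    have hsub : insert j (N.filter (fun k => τ k < τ j)) ⊆ N.filter (fun k => τ k ≤ t) := by
      intro k hk
      rcases Finset.mem_insert.1 hk with rfl | hk
      · exact Finset.mem_filter.2 ⟨hj, h⟩
      · rw [Finset.mem_filter] at hk ⊢
        exact ⟨hk.1, by omega⟩
    have := Finset.card_le_card hsub
    rw [Finset.card_insert_of_notMem (by simp)] at this
    omega

end Selection

section PFequiv

variable {V : Type*} [Fintype V] [DecidableEq V] (H : SimpleGraph V) (r : V)

/-- The neighborhood of `i` as a Finset (classical). -/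
noncomputable def nbr (i : V) : Finset V := Finset.univ.filter (fun j => H.Adj i j)

lemma mem_nbr {H : SimpleGraph V} {i j : V} : j ∈ nbr H i ↔ H.Adj i j := by
  classical simp [nbr]

/-- Parking-function / superstable condition. -/
def IsPF (b : V → ℕ) : Prop :=
  b r = 0 ∧ ∀ σ : Finset V, σ.Nonempty → r ∉ σ →
    ∃ i ∈ σ, b i < ((nbr H i) \ σ).card

variable {H r}

/-- Burnability for the forward process. -/
def okF (b : V → ℕ) : V → Finset V → Prop := fun i B => b i < ((nbr H i) ∩ B).card

/-- Burnability for the reverse process. -/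
def okR (f : PFn V r) : V → Finset V → Prop := fun i B => f.p i ∈ B

lemma coverF {b : V → ℕ} (hb : IsPF H r b) : Covers (okF (H := H) b) r := by
  intro B hrB hBu
  have hne : Bᶜ.Nonempty := by
    rw [← Finset.card_pos, Finset.card_compl]
    have : B.card < Fintype.card V :=
      lt_of_le_of_ne (Finset.card_le_univ B) (fun h => hBu (Finset.card_eq_iff_eq_univ _ |>.1 h))
    omega
  have hrn : r ∉ Bᶜ := by simp [hrB]
  obtain ⟨i, hi, hlt⟩ := hb.2 Bᶜ hne hrn
  refine ⟨i, mem_nxtSet.2 ⟨by simpa using hi, ?_⟩⟩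
  unfold okF
  have heq : nbr H i \ Bᶜ = nbr H i ∩ B := by
    ext k; simp [Finset.mem_sdiff, Finset.mem_compl]
  rwa [heq] at hlt

lemma coverR (f : PFn V r) : Covers (okR f) r := by
  intro B hrB hBu
  have hne : Bᶜ.Nonempty := by
    rw [← Finset.card_pos, Finset.card_compl]
    have : B.card < Fintype.card V :=
      lt_of_le_of_ne (Finset.card_le_univ B) (fun h => hBu (Finset.card_eq_iff_eq_univ _ |>.1 h))
    omega
  obtain ⟨v, hv⟩ := hne
  have hvB : v ∉ B := by simpa using hv
  have hex : ∃ k, f.p^[k] v ∈ B := ⟨f.ht v, by rw [f.iterate_ht]; exact hrB⟩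
  classical
  set k := Nat.find hex with hk
  have hk0 : k ≠ 0 := by
    intro h
    have := Nat.find_spec hex
    rw [← hk, h, Function.iterate_zero_apply] at this
    exact hvB this
  refine ⟨f.p^[k-1] v, mem_nxtSet.2 ⟨Nat.find_min hex (by omega), ?_⟩⟩
  unfold okR
  have : f.p^[k] v = f.p (f.p^[k-1] v) := by
    conv_lhs => rw [show k = (k-1)+1 by omega]
    rw [Function.iterate_succ_apply']
  rw [← this]
  exact Nat.find_spec hex

/-- The time function of the forward process. -/
noncomputable def tF {b : V → ℕ} (hb : IsPF H r b) : V → ℕ := btime _ r (coverF hb)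

/-- The time function of the reverse process. -/
noncomputable def tR (f : PFn V r) : V → ℕ := btime _ r (coverR f)

lemma burnF_filter {b : V → ℕ} (hb : IsPF H r b) (t : ℕ) (i : V) :
    (nbr H i) ∩ burn (okF (H := H) b) r t = (nbr H i).filter (fun k => tF hb k ≤ t) := by
  classical
  ext k
  rw [Finset.mem_inter, Finset.mem_filter, mem_burn_iff_btime (coverF hb)]
  rfl

lemma burnR_filter (f : PFn V r) (t : ℕ) (i : V) :
    (nbr H i) ∩ burn (okR f) r t = (nbr H i).filter (fun k => tR f k ≤ t) := by
  classical
  ext k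
  rw [Finset.mem_inter, Finset.mem_filter, mem_burn_iff_btime (coverR f)]
  rfl

lemma tF_card_lt {b : V → ℕ} (hb : IsPF H r b) {i : V} (hi : i ≠ r) :
    b i < (nbr H i).card := by
  have h0 : tF hb i ≠ 0 := fun h => hi ((btime_eq_zero_iff (coverF hb)).1 h)
  have := btime_ok (coverF hb) h0
  unfold okF at this
  exact lt_of_lt_of_le this (Finset.card_le_card Finset.inter_subset_left)

/-- The parent function underlying the forward map. -/
noncomputable def fwdP {b : V → ℕ} (hb : IsPF H r b) : V → V := fun i =>
  if h : i = r then r else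
    (exists_unique_count (btime_injective (coverF hb))
      (tF_card_lt hb h) (τ := tF hb)).exists.choose

lemma fwdP_root {b : V → ℕ} (hb : IsPF H r b) : fwdP hb r = r := dif_pos rfl

lemma fwdP_spec {b : V → ℕ} (hb : IsPF H r b) {i : V} (hi : i ≠ r) :
    fwdP hb i ∈ nbr H i ∧
      ((nbr H i).filter (fun k => tF hb k < tF hb (fwdP hb i))).card = b i := by
  have he : fwdP hb i = (exists_unique_count (btime_injective (coverF hb))
      (tF_card_lt hb hi) (τ := tF hb)).exists.choose := dif_neg hi
  rw [he]
  exact (exists_unique_count (btime_injective (coverF hb))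
    (tF_card_lt hb hi) (τ := tF hb)).exists.choose_spec

lemma fwdP_adj {b : V → ℕ} (hb : IsPF H r b) {i : V} (hi : i ≠ r) :
    H.Adj i (fwdP hb i) := mem_nbr.1 (fwdP_spec hb hi).1

lemma fwdP_tF_lt {b : V → ℕ} (hb : IsPF H r b) {i : V} (hi : i ≠ r) :
    tF hb (fwdP hb i) < tF hb i := by
  have hspec := fwdP_spec hb hi
  have h0 : tF hb i ≠ 0 := fun h => hi ((btime_eq_zero_iff (coverF hb)).1 h)
  have hok := btime_ok (coverF hb) h0
  have hok' : b i < ((nbr H i) ∩ burn (okF (H := H) b) r (tF hb i - 1)).card := hok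
  rw [burnF_filter hb] at hok'
  rw [← hspec.2] at hok'
  have := (count_lt_iff hspec.1 (tF hb i - 1)).1 hok'
  omega

/-- The forward map: from a parking function to a parent function. -/
noncomputable def fwd {b : V → ℕ} (hb : IsPF H r b) : PFn V r where
  p := fwdP hb
  root := fwdP_root hb
  nroot := fun v hv h => H.irrefl (h ▸ fwdP_adj hb hv)
  acyc := by
    intro v
    generalize hn : tF hb v = nn
    induction nn using Nat.strong_induction_on generalizing v with
    | _ nn ih =>
      by_cases hv : v = r
      · exact ⟨0, by simpa using hv⟩
      · obtain ⟨k, hk⟩ := ih _ (hn ▸ fwdP_tF_lt hb hv) _ rfl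
        refine ⟨k + 1, ?_⟩
        rw [Function.iterate_succ_apply]
        exact hk

/-- The reverse map: from a parent function to a configuration. -/
noncomputable def rv (f : PFn V r) : V → ℕ := fun i =>
  if i = r then 0 else ((nbr H i).filter (fun k => tR f k < tR f (f.p i))).card

lemma tR_p_lt (f : PFn V r) {i : V} (hi : i ≠ r) : tR f (f.p i) < tR f i := by
  have h0 : tR f i ≠ 0 := fun h => hi ((btime_eq_zero_iff (coverR f)).1 h)
  have hok := btime_ok (coverR f) h0
  unfold okR at hok
  have := (mem_burn_iff_btime (coverR f)).1 hok
  have h1 : tR f i - 1 < tR f i := by omega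
  exact lt_of_le_of_lt this h1

lemma rv_isPF (f : PFn V r) (hadj : ∀ v, v ≠ r → H.Adj v (f.p v)) :
    IsPF H r (rv (H := H) f) := by
  classical
  constructor
  · simp [rv]
  · intro σ hσ hrσ
    obtain ⟨i, hiσ, hmin⟩ := Finset.exists_min_image σ (tR f) hσ
    have hir : i ≠ r := fun h => hrσ (h ▸ hiσ)
    refine ⟨i, hiσ, ?_⟩
    rw [rv, if_neg hir]
    have hsub : insert (f.p i) ((nbr H i).filter (fun k => tR f k < tR f (f.p i)))
        ⊆ (nbr H i) \ σ := by
      intro k hk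
      rcases Finset.mem_insert.1 hk with rfl | hk
      · refine Finset.mem_sdiff.2 ⟨mem_nbr.2 (hadj i hir), fun hkσ => ?_⟩
        exact absurd (hmin _ hkσ) (by have := tR_p_lt f hir; omega)
      · rw [Finset.mem_filter] at hk
        refine Finset.mem_sdiff.2 ⟨hk.1, fun hkσ => ?_⟩
        have := hmin _ hkσ
        have := tR_p_lt f hir
        omega
    have := Finset.card_le_card hsub
    rw [Finset.card_insert_of_notMem (by simp)] at this
    omega

end PFequiv
section RoundTrips

variable {V : Type*} [Fintype V] [DecidableEq V] {H : SimpleGraph V} {r : V}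

lemma btime_eq_of_burn_eq {ok ok' : V → Finset V → Prop} (hc : Covers ok r)
    (hc' : Covers ok' r) (h : ∀ t, burn ok' r t = burn ok r t) (v : V) :
    btime ok' r hc' v = btime ok r hc v := by
  apply le_antisymm
  · apply Nat.find_min'
    rw [h]
    exact (mem_burn_iff_btime hc).2 le_rfl
  · apply Nat.find_min'
    rw [← h]
    exact (mem_burn_iff_btime hc').2 le_rfl

lemma burnRF (f : PFn V r) (hadj : ∀ v, v ≠ r → H.Adj v (f.p v)) :
    ∀ t, burn (okF (H := H) (rv (H := H) f)) r t = burn (okR f) r t := by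
  apply burn_congr
  intro t i hi
  have hir : i ≠ r := fun h => hi (by rw [h]; exact root_mem_burn t)
  show f.p i ∈ burn (okR (r := r) f) r t ↔
    rv (H := H) f i < ((nbr H i) ∩ burn (okR (r := r) f) r t).card
  rw [burnR_filter, mem_burn_iff_btime (coverR f)]
  rw [show rv (H := H) f i
      = ((nbr H i).filter (fun k => tR f k < tR f (f.p i))).card from if_neg hir]
  exact (count_lt_iff (mem_nbr.2 (hadj i hir)) t).symm

lemma tF_rv_eq (f : PFn V r) (hadj : ∀ v, v ≠ r → H.Adj v (f.p v)) :
    tF (rv_isPF f hadj) = tR f :=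
  funext fun v => btime_eq_of_burn_eq (coverR f) (coverF (rv_isPF f hadj)) (burnRF f hadj) v

lemma fwd_rv (f : PFn V r) (hadj : ∀ v, v ≠ r → H.Adj v (f.p v)) :
    fwd (rv_isPF f hadj) = f := by
  apply PFn.ext
  funext i
  by_cases hir : i = r
  · rw [show (fwd (rv_isPF f hadj)).p i = fwdP (rv_isPF f hadj) i from rfl, hir,
      fwdP_root, f.root]
  · have hu := exists_unique_count (S := nbr H i) (btime_injective (coverF (rv_isPF f hadj)))
      (tF_card_lt (rv_isPF f hadj) hir) (τ := tF (rv_isPF f hadj))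
    have h1 := fwdP_spec (rv_isPF f hadj) hir
    have h2 : f.p i ∈ nbr H i ∧
        ((nbr H i).filter (fun k => tF (rv_isPF f hadj) k
          < tF (rv_isPF f hadj) (f.p i))).card = rv (H := H) f i := by
      rw [tF_rv_eq f hadj]
      exact ⟨mem_nbr.2 (hadj i hir), (if_neg hir).symm⟩
    exact hu.unique h1 h2

lemma burnFR {b : V → ℕ} (hb : IsPF H r b) :
    ∀ t, burn (okR (fwd hb)) r t = burn (okF (H := H) b) r t := by
  apply burn_congr
  intro t i hi
  have hir : i ≠ r := fun h => hi (by rw [h]; exact root_mem_burn t)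
  show b i < ((nbr H i) ∩ burn (okF (H := H) b) r t).card ↔
    fwdP hb i ∈ burn (okF (H := H) b) r t
  rw [burnF_filter hb, mem_burn_iff_btime (coverF hb),
    ← (fwdP_spec hb hir).2]
  exact count_lt_iff (fwdP_spec hb hir).1 t

lemma tR_fwd_eq {b : V → ℕ} (hb : IsPF H r b) : tR (fwd hb) = tF hb :=
  funext fun v => btime_eq_of_burn_eq (coverF hb) (coverR (fwd hb)) (burnFR hb) v

lemma rv_fwd {b : V → ℕ} (hb : IsPF H r b) : rv (H := H) (fwd hb) = b := by
  funext i
  by_cases hir : i = r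
  · rw [show rv (H := H) (fwd hb) i = 0 from if_pos hir, hir]
    exact hb.1.symm
  · rw [show rv (H := H) (fwd hb) i
      = ((nbr H i).filter (fun k => tR (fwd hb) k
          < tR (fwd hb) ((fwd hb).p i))).card from if_neg hir,
      tR_fwd_eq hb]
    exact (fwdP_spec hb hir).2

variable (H r) in
/-- The Dhar burning bijection between parking functions and parent functions. -/
noncomputable def pfEquiv :
    {b : V → ℕ // IsPF H r b} ≃ {f : PFn V r // ∀ v, v ≠ r → H.Adj v (f.p v)} where
  toFun b := ⟨fwd b.2, fun v hv => fwdP_adj b.2 hv⟩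
  invFun f := ⟨rv (H := H) f.1, rv_isPF f.1 f.2⟩
  left_inv b := Subtype.ext (rv_fwd b.2)
  right_inv f := Subtype.ext (fwd_rv f.1 f.2)

end RoundTrips
section Trees

open SimpleGraph

variable {V : Type*} {r : V}

/-- The graph of a parent function: edges from each non-root vertex to its parent. -/
def PFn.graph (f : PFn V r) : SimpleGraph V where
  Adj u v := (f.p u = v ∧ u ≠ r) ∨ (f.p v = u ∧ v ≠ r)
  symm := by constructor; intro u v h; tauto
  loopless := by
    constructor; intro u h
    rcases h with ⟨h1, h2⟩ | ⟨h1, h2⟩ <;> exact f.nroot _ h2 h1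

lemma PFn.graph_adj {f : PFn V r} {u v : V} :
    f.graph.Adj u v ↔ (f.p u = v ∧ u ≠ r) ∨ (f.p v = u ∧ v ≠ r) := Iff.rfl

lemma PFn.adj_parent (f : PFn V r) {v : V} (hv : v ≠ r) : f.graph.Adj v (f.p v) :=
  Or.inl ⟨rfl, hv⟩

open scoped Classical in
/-- The canonical walk from a vertex to the root along parent pointers. -/
noncomputable def PFn.chainW (f : PFn V r) (v : V) : f.graph.Walk v r :=
  if h : v = r then (SimpleGraph.Walk.nil : f.graph.Walk r r).copy h.symm rfl
  else SimpleGraph.Walk.cons (f.adj_parent h) (f.chainW (f.p v))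
  termination_by f.ht v
  decreasing_by exact f.ht_p_lt v h

lemma PFn.chainW_root (f : PFn V r) :
    f.chainW r = (SimpleGraph.Walk.nil : f.graph.Walk r r).copy rfl rfl := by
  rw [PFn.chainW]
  simp

lemma PFn.chainW_ne (f : PFn V r) {v : V} (hv : v ≠ r) :
    f.chainW v = SimpleGraph.Walk.cons (f.adj_parent hv) (f.chainW (f.p v)) := by
  rw [PFn.chainW]
  simp [hv]

lemma PFn.chainW_support_ht (f : PFn V r) (v : V) :
    ∀ x ∈ (f.chainW v).support, f.ht x ≤ f.ht v := by
  generalize hn : f.ht v = n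
  induction n using Nat.strong_induction_on generalizing v with
  | _ n ih =>
    by_cases hv : v = r
    · subst hv
      rw [PFn.chainW_root]
      intro x hx
      simp at hx
      rw [hx]
      omega
    · rw [PFn.chainW_ne f hv]
      intro x hx
      rw [SimpleGraph.Walk.support_cons, List.mem_cons] at hx
      rcases hx with rfl | hx
      · omega
      · have h1 := f.ht_p_lt v hv
        have := ih _ (hn ▸ h1) (f.p v) rfl x hx
        omega

lemma PFn.chainW_isPath (f : PFn V r) (v : V) : (f.chainW v).IsPath := by
  generalize hn : f.ht v = n
  induction n using Nat.strong_induction_on generalizing v with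
  | _ n ih =>
    by_cases hv : v = r
    · subst hv
      rw [PFn.chainW_root]
      simp
    · rw [PFn.chainW_ne f hv]
      rw [SimpleGraph.Walk.cons_isPath_iff]
      have h1 := f.ht_p_lt v hv
      refine ⟨ih _ (hn ▸ h1) (f.p v) rfl, fun hmem => ?_⟩
      have := f.chainW_support_ht (f.p v) v hmem
      omega

lemma PFn.graph_connected [Nonempty V] (f : PFn V r) : f.graph.Connected := by
  rw [SimpleGraph.connected_iff]
  refine ⟨fun u w => ?_, inferInstance⟩
  exact ((f.chainW u).reachable).trans ((f.chainW w).reachable).symm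

/-- Descending lemma: a path avoiding the parent of its start goes strictly down
(in the sense that heights increase). -/
lemma PFn.descend (f : PFn V r) {c w : V} (W : f.graph.Walk c w) (hW : W.IsPath)
    (hp : f.p c ∉ W.support) : f.ht c ≤ f.ht w ∧ (c ≠ w → f.ht c < f.ht w) := by
  induction W with
  | nil => exact ⟨le_rfl, fun h => absurd rfl h⟩
  | @cons c y w h W ih =>
    rw [SimpleGraph.Walk.cons_isPath_iff] at hW
    rw [SimpleGraph.Walk.support_cons, List.mem_cons] at hp
    push_neg at hp
    have hpW : f.p c ∉ W.support := hp.2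
    have hpy : f.p c ≠ y := fun h' => hpW (h' ▸ W.start_mem_support)
    rcases h with ⟨h1, h2⟩ | ⟨h1, h2⟩
    · exact absurd h1 hpy
    · -- p y = c, y ≠ r : descending step
      have ihy := ih hW.1 (h1 ▸ hW.2)
      have hylt : f.ht c < f.ht y := h1 ▸ f.ht_p_lt y h2
      have : f.ht c < f.ht w := lt_of_lt_of_le hylt ihy.1
      exact ⟨le_of_lt this, fun _ => this⟩

lemma path_nil_of_eq {G : SimpleGraph V} {u : V} (P : G.Walk u u) (hP : P.IsPath) :
    P = SimpleGraph.Walk.nil := by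
  cases P with
  | nil => rfl
  | cons h W =>
    rw [SimpleGraph.Walk.cons_isPath_iff] at hP
    exact absurd W.end_mem_support hP.2

/-- The first edge of a path from `u` up to `w` (with `ht w ≤ ht u`, `u ≠ w`)
goes to the parent of `u`. -/
lemma PFn.first_edge (f : PFn V r) {u w : V} (hne : u ≠ w) (hge : f.ht w ≤ f.ht u)
    (P : f.graph.Walk u w) (hP : P.IsPath) :
    ∃ (hur : u ≠ r) (P' : f.graph.Walk (f.p u) w),
      P = SimpleGraph.Walk.cons (f.adj_parent hur) P' ∧ P'.IsPath := by
  cases P with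
  | nil => exact absurd rfl hne
  | @cons _ y _ h W =>
    rw [SimpleGraph.Walk.cons_isPath_iff] at hP
    rcases h with ⟨h1, h2⟩ | ⟨h1, h2⟩
    · subst h1
      exact ⟨h2, W, rfl, hP.1⟩
    · -- p y = u: then the walk descends and cannot come back up
      exfalso
      have hdes := f.descend W hP.1 (h1 ▸ hP.2)
      have : f.ht u < f.ht y := h1 ▸ f.ht_p_lt y h2
      rcases eq_or_ne y w with rfl | hyw
      · omega
      · have := hdes.2 hyw
        omega

lemma PFn.path_unique_aux (f : PFn V r) :
    ∀ (M : ℕ) (u w : V), f.ht u + f.ht w ≤ M → f.ht w ≤ f.ht u →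
      ∀ (P Q : f.graph.Walk u w), P.IsPath → Q.IsPath → P = Q := by
  intro M
  induction M with
  | zero =>
    intro u w h1 h2 P Q hP hQ
    have hu : f.ht u = 0 := by omega
    have hw : f.ht w = 0 := by omega
    have hur := (f.ht_eq_zero_iff u).1 hu
    have hwr := (f.ht_eq_zero_iff w).1 hw
    subst hur
    have : w = u := hwr
    subst this
    rw [path_nil_of_eq P hP, path_nil_of_eq Q hQ]
  | succ M ih =>
    intro u w h1 h2 P Q hP hQ
    by_cases huw : u = w
    · subst huw
      rw [path_nil_of_eq P hP, path_nil_of_eq Q hQ]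
    · obtain ⟨hur, P', hPe, hP'⟩ := f.first_edge huw h2 P hP
      obtain ⟨_, Q', hQe, hQ'⟩ := f.first_edge huw h2 Q hQ
      have hht := f.ht_p u hur
      have key : P' = Q' := by
        rcases lt_or_eq_of_le h2 with hlt | heq
        · exact ih (f.p u) w (by omega) (by omega) P' Q' hP' hQ'
        · have := ih w (f.p u) (by omega) (by omega) P'.reverse Q'.reverse
            (hP'.reverse) (hQ'.reverse)
          have h3 := congrArg SimpleGraph.Walk.reverse this
          rwa [SimpleGraph.Walk.reverse_reverse, SimpleGraph.Walk.reverse_reverse] at h3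
      rw [hPe, hQe, key]
    
lemma PFn.path_unique (f : PFn V r) {u w : V} (P Q : f.graph.Walk u w)
    (hP : P.IsPath) (hQ : Q.IsPath) : P = Q := by
  rcases le_or_gt (f.ht w) (f.ht u) with h | h
  · exact f.path_unique_aux (f.ht u + f.ht w) u w le_rfl h P Q hP hQ
  · have := f.path_unique_aux (f.ht w + f.ht u) w u le_rfl (le_of_lt h)
      P.reverse Q.reverse hP.reverse hQ.reverse
    have h3 := congrArg SimpleGraph.Walk.reverse this
    rwa [SimpleGraph.Walk.reverse_reverse, SimpleGraph.Walk.reverse_reverse] at h3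

lemma PFn.graph_isTree [Nonempty V] (f : PFn V r) : f.graph.IsTree := by
  refine ⟨f.graph_connected, SimpleGraph.isAcyclic_of_path_unique ?_⟩
  intro v w p q
  exact Subtype.ext (f.path_unique p.1 q.1 p.2 q.2)

end Trees
section TreeInv

open SimpleGraph

variable {V : Type*} {r : V} {T : SimpleGraph V}

/-- The canonical path from `v` to `r` in a tree. -/
noncomputable def pathTo (hT : T.IsTree) (r v : V) : T.Walk v r :=
  (hT.existsUnique_path v r).exists.choose

lemma pathTo_isPath (hT : T.IsTree) (r v : V) : (pathTo hT r v).IsPath :=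
  (hT.existsUnique_path v r).exists.choose_spec

lemma pathTo_unique (hT : T.IsTree) {r v : V} (W : T.Walk v r) (hW : W.IsPath) :
    W = pathTo hT r v :=
  ((hT.existsUnique_path v r).unique hW (pathTo_isPath hT r v))

lemma pathTo_root (hT : T.IsTree) (r : V) : pathTo hT r r = SimpleGraph.Walk.nil :=
  (path_nil_of_eq _ (pathTo_isPath hT r r))

lemma pathTo_length_pos (hT : T.IsTree) {r v : V} (hv : v ≠ r) :
    0 < (pathTo hT r v).length := by
  rcases Nat.eq_zero_or_pos (pathTo hT r v).length with h | h
  · exact absurd (SimpleGraph.Walk.eq_of_length_eq_zero h) hv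
  · exact h

/-- The parent of a vertex in a tree: the next vertex on the path to the root. -/
noncomputable def treeP (hT : T.IsTree) (r : V) : V → V := fun v =>
  (pathTo hT r v).getVert 1

lemma treeP_root (hT : T.IsTree) (r : V) : treeP hT r r = r := by
  unfold treeP
  rw [pathTo_root]
  rfl

lemma treeP_adj (hT : T.IsTree) {r v : V} (hv : v ≠ r) : T.Adj v (treeP hT r v) := by
  have h := SimpleGraph.Walk.adj_getVert_succ (pathTo hT r v) (pathTo_length_pos hT hv)
    (i := 0)
  rwa [SimpleGraph.Walk.getVert_zero] at h

lemma treeP_tail (hT : T.IsTree) {r v : V} (hv : v ≠ r) :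
    (pathTo hT r (treeP hT r v)).length + 1 = (pathTo hT r v).length := by
  have hnn : ¬ (pathTo hT r v).Nil := by
    rw [SimpleGraph.Walk.nil_iff_length_eq]
    have := pathTo_length_pos hT hv
    omega
  have htail : ((pathTo hT r v).tail).IsPath := (pathTo_isPath hT r v).tail
  have := pathTo_unique hT ((pathTo hT r v).tail) htail
  unfold treeP
  rw [← this]
  exact SimpleGraph.Walk.length_tail_add_one hnn

/-- The parent function of a tree. -/
noncomputable def treePFn (hT : T.IsTree) (r : V) : PFn V r where
  p := treeP hT r
  root := treeP_root hT r
  nroot := fun v hv h => T.irrefl (h ▸ treeP_adj hT hv)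
  acyc := by
    intro v
    generalize hn : (pathTo hT r v).length = n
    induction n using Nat.strong_induction_on generalizing v with
    | _ n ih =>
      by_cases hv : v = r
      · exact ⟨0, by simpa using hv⟩
      · have h1 := treeP_tail hT hv
        obtain ⟨k, hk⟩ := ih ((pathTo hT r (treeP hT r v)).length) (by omega) _ rfl
        exact ⟨k + 1, by rw [Function.iterate_succ_apply]; exact hk⟩

/-- Round trip A: the parent function of the graph of a parent function. -/
lemma treePFn_graph [Nonempty V] (f : PFn V r) :
    treePFn (f.graph_isTree) r = f := by
  apply PFn.ext
  funext v
  by_cases hv : v = r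
  · rw [show (treePFn (f.graph_isTree) r).p v = treeP (f.graph_isTree) r v from rfl, hv,
      treeP_root, f.root]
  · have hchain := pathTo_unique (f.graph_isTree) (f.chainW v) (f.chainW_isPath v)
    show treeP (f.graph_isTree) r v = f.p v
    unfold treeP
    rw [← hchain, f.chainW_ne hv]
    simp [SimpleGraph.Walk.getVert_cons_succ]

/-- Round trip B: the graph of the parent function of a tree. -/
lemma graph_treePFn (hT : T.IsTree) (r : V) : (treePFn hT r).graph = T := by
  classical
  ext u v
  rw [PFn.graph_adj]
  constructor
  · rintro (⟨h1, h2⟩ | ⟨h1, h2⟩)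
    · have h1' : treeP hT r u = v := h1
      exact h1' ▸ treeP_adj hT h2
    · have h1' : treeP hT r v = u := h1
      exact (h1' ▸ treeP_adj hT h2).symm
  · intro hadj
    by_cases hu : u ∈ (pathTo hT r v).support
    · -- then v's parent is u
      right
      have hvr : v ≠ r := by
        rintro rfl
        rw [pathTo_root] at hu
        simp at hu
        exact T.irrefl (hu ▸ hadj)
      refine ⟨?_, hvr⟩
      have huv : u ≠ v := fun h => T.irrefl (h ▸ hadj)
      -- v not in the support of dropUntil
      have hvd : v ∉ ((pathTo hT r v).dropUntil u hu).support := by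
        intro hvd
        have hspec := SimpleGraph.Walk.take_spec (pathTo hT r v) hu
        have hnodup := (pathTo_isPath hT r v).support_nodup
        rw [← hspec, SimpleGraph.Walk.support_append] at hnodup
        have hvtake : v ∈ ((pathTo hT r v).takeUntil u hu).support :=
          SimpleGraph.Walk.start_mem_support _
        rw [List.nodup_append] at hnodup
        rw [SimpleGraph.Walk.support_eq_cons] at hvd
        rcases List.mem_cons.1 hvd with h | h
        · exact huv h.symm
        · exact hnodup.2.2 v hvtake v h rfl
      have hW : (SimpleGraph.Walk.cons hadj.symm ((pathTo hT r v).dropUntil u hu)).IsPath := by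
        rw [SimpleGraph.Walk.cons_isPath_iff]
        exact ⟨(pathTo_isPath hT r v).dropUntil hu, hvd⟩
      have := pathTo_unique hT _ hW
      show treeP hT r v = u
      unfold treeP
      rw [← this]
      simp [SimpleGraph.Walk.getVert_cons_succ]
    · -- then u's parent is v
      left
      have hur : u ≠ r := by
        intro h
        rw [h] at hu
        exact hu ((pathTo hT r v).end_mem_support)
      refine ⟨?_, hur⟩
      have hW : (SimpleGraph.Walk.cons hadj (pathTo hT r v)).IsPath := by
        rw [SimpleGraph.Walk.cons_isPath_iff]
        exact ⟨pathTo_isPath hT r v, hu⟩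
      have := pathTo_unique hT _ hW
      show treeP hT r u = v
      unfold treeP
      rw [← this]
      simp [SimpleGraph.Walk.getVert_cons_succ]

end TreeInv

section TreeEquiv

open SimpleGraph

variable {V : Type*} (H : SimpleGraph V) (r : V)

/-- The equivalence between `H`-compatible parent functions and spanning trees of `H`. -/
noncomputable def treeEquiv [Nonempty V] :
    {f : PFn V r // ∀ v, v ≠ r → H.Adj v (f.p v)} ≃ {T : SimpleGraph V // T ≤ H ∧ T.IsTree} where
  toFun f := ⟨f.1.graph, by
    intro u v h
    rw [PFn.graph_adj] at h
    rcases h with ⟨h1, h2⟩ | ⟨h1, h2⟩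
    · exact h1 ▸ f.2 u h2
    · exact (h1 ▸ f.2 v h2).symm, f.1.graph_isTree⟩
  invFun T := ⟨treePFn T.2.2 r, by
    intro v hv
    exact T.2.1 (treeP_adj T.2.2 hv)⟩
  left_inv f := Subtype.ext (treePFn_graph f.1)
  right_inv T := Subtype.ext (graph_treePFn T.2.2 r)

end TreeEquiv

section StepA

open MvPolynomial Finset

variable {K : Type*} [Field K]

lemma prod_X_pow_eq_monomial' {n : ℕ} (σ : Finset (Fin n)) (e : Fin n → ℕ) :
    (∏ i ∈ σ, (X i : MvPolynomial (Fin n) K) ^ e i)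
      = monomial (∑ i ∈ σ, Finsupp.single i (e i)) 1 := by
  classical
  induction σ using Finset.induction with
  | empty => simp [monomial_zero']
  | insert _ _ hni ih =>
    rw [Finset.prod_insert hni, Finset.sum_insert hni, ih, X_pow_eq_monomial,
      monomial_mul, one_mul]

lemma sum_single_apply {n : ℕ} (σ : Finset (Fin n)) (e : Fin n → ℕ) (j : Fin n) :
    (∑ i ∈ σ, Finsupp.single i (e i)) j = if j ∈ σ then e j else 0 := by
  classical
  rw [Finset.sum_apply']
  simp_rw [Finsupp.single_apply]
  exact Finset.sum_ite_eq' σ j e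

/-- `doutDeg` as a Finset cardinality. -/
lemma doutDeg_eq_card {n : ℕ} (G : SimpleGraph (Fin n)) (σ : Finset (Fin n)) (i : Fin n) :
    doutDeg G σ i = (Finset.univ.filter (fun j => j ∉ σ ∧ G.Adj i j)).card := by
  classical
  rw [doutDeg, Set.ncard_eq_toFinset_card']
  congr 1
  ext j
  simp

/-- Membership of the standard monomial in the tree ideal. -/
lemma mem_treeIdeal_iff {n : ℕ} (G : SimpleGraph (Fin n)) (a : Fin n → ℕ) :
    (∏ i, (X i : MvPolynomial (Fin n) K) ^ a i) ∈ treeIdeal n G K ↔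
      ∃ σ : Finset (Fin n), σ.Nonempty ∧ (G.induce (↑σ : Set (Fin n))).Connected ∧
        ∀ j ∈ σ, doutDeg G σ j + 1 ≤ a j := by
  classical
  have hideal : treeIdeal n G K = Ideal.span ((fun s => (monomial s (1 : K))) ''
      {d | ∃ σ : Finset (Fin n), σ.Nonempty ∧ (G.induce (↑σ : Set (Fin n))).Connected ∧
        d = ∑ i ∈ σ, Finsupp.single i (doutDeg G σ i + 1)}) := by
    unfold treeIdeal
    congr 1
    ext f
    constructor
    · rintro ⟨σ, h1, h2, rfl⟩
      exact ⟨_, ⟨σ, h1, h2, rfl⟩, (prod_X_pow_eq_monomial' σ _).symm⟩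
    · rintro ⟨d, ⟨σ, h1, h2, rfl⟩, rfl⟩
      exact ⟨σ, h1, h2, (prod_X_pow_eq_monomial' σ _).symm⟩
  rw [hideal, show (∏ i, (X i : MvPolynomial (Fin n) K) ^ a i)
    = monomial (∑ i, Finsupp.single i (a i)) 1 from prod_X_pow_eq_monomial' _ _,
    mem_ideal_span_monomial_image]
  rw [support_monomial, if_neg (one_ne_zero' K)]
  constructor
  · intro h
    obtain ⟨si, ⟨σ, h1, h2, rfl⟩, hle⟩ := h _ (Finset.mem_singleton_self _)
    refine ⟨σ, h1, h2, fun j hj => ?_⟩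
    have := (Finsupp.le_def.1 hle) j
    rwa [sum_single_apply, if_pos hj, sum_single_apply, if_pos (Finset.mem_univ j)] at this
  · rintro ⟨σ, h1, h2, h3⟩ xi hxi
    rw [Finset.mem_singleton] at hxi
    subst hxi
    refine ⟨_, ⟨σ, h1, h2, rfl⟩, Finsupp.le_def.2 fun j => ?_⟩
    rw [sum_single_apply, sum_single_apply, if_pos (Finset.mem_univ j)]
    by_cases hj : j ∈ σ
    · rw [if_pos hj]; exact h3 j hj
    · rw [if_neg hj]; omega

end StepA

section Component

open SimpleGraph

variable {n : ℕ} {G : SimpleGraph (Fin n)}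

lemma induce_reachable_transfer {s s' : Set (Fin n)} :
    ∀ {x y : s} (W : (G.induce s).Walk x y)
      (_ : ∀ z ∈ W.support, (z : Fin n) ∈ s') (hx : ↑x ∈ s') (hy : ↑y ∈ s'),
      (G.induce s').Reachable ⟨x, hx⟩ ⟨y, hy⟩ := by
  intro x y W
  induction W with
  | nil =>
    intro _ hx hy
    exact Reachable.refl _
  | @cons x y' y h W ih =>
    intro hall hx hy
    have hy' : (y' : Fin n) ∈ s' := by
      apply hall
      rw [SimpleGraph.Walk.support_cons]
      exact List.mem_cons_of_mem _ W.start_mem_support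
    have hadj : (G.induce s').Adj ⟨x, hx⟩ ⟨y', hy'⟩ := by
      have : G.Adj ↑x ↑y' := h
      exact this
    refine hadj.reachable.trans (ih ?_ hy' hy)
    intro z hz
    apply hall
    rw [SimpleGraph.Walk.support_cons]
    exact List.mem_cons_of_mem _ hz

lemma connected_reduction (a : Fin n → ℕ)
    (h : ∀ σ : Finset (Fin n), σ.Nonempty → (G.induce (↑σ : Set (Fin n))).Connected →
      ∃ i ∈ σ, a i ≤ doutDeg G σ i) :
    ∀ σ : Finset (Fin n), σ.Nonempty → ∃ i ∈ σ, a i ≤ doutDeg G σ i := by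
  classical
  rintro σ ⟨v, hv⟩
  set σ' : Finset (Fin n) := σ.filter (fun u => ∃ (hu : u ∈ σ),
    (G.induce (↑σ : Set (Fin n))).Reachable ⟨v, by simpa using hv⟩ ⟨u, by simpa using hu⟩)
    with hσ'
  have hvσ' : v ∈ σ' := by
    rw [hσ', Finset.mem_filter]
    exact ⟨hv, hv, Reachable.refl _⟩
  have hsub : σ' ⊆ σ := Finset.filter_subset _ _
  -- any vertex of σ reachable from a vertex of σ' is in σ'
  have hreach : ∀ (u : Fin n) (hu : u ∈ σ),
      (G.induce (↑σ : Set (Fin n))).Reachable ⟨v, by simpa using hv⟩ ⟨u, by simpa using hu⟩ →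
        u ∈ σ' := by
    intro u hu hr
    rw [hσ', Finset.mem_filter]
    exact ⟨hu, hu, hr⟩
  have hconn : (G.induce (↑σ' : Set (Fin n))).Connected := by
    rw [SimpleGraph.connected_iff]
    refine ⟨?_, ⟨⟨v, by simpa using hvσ'⟩⟩⟩
    rintro ⟨x, hx⟩ ⟨y, hy⟩
    have hx' : x ∈ σ' := by simpa using hx
    have hy' : y ∈ σ' := by simpa using hy
    -- reachability from v to x within σ, with all vertices in σ'
    have key : ∀ (u : Fin n) (hu' : u ∈ σ'),
        (G.induce (↑σ' : Set (Fin n))).Reachable ⟨v, by simpa using hvσ'⟩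
          ⟨u, by simpa using hu'⟩ := by
      intro u hu'
      obtain ⟨hu, hu2, hr⟩ := Finset.mem_filter.1 (hσ' ▸ hu')
      obtain ⟨W⟩ := hr
      apply induce_reachable_transfer W
      · intro z hz
        -- z is reachable from v in induce σ
        have hzσ : (z : Fin n) ∈ σ := by simpa using z.2
        have : (G.induce (↑σ : Set (Fin n))).Reachable ⟨v, by simpa using hv⟩ z :=
          (W.takeUntil z hz).reachable
        have hzσ' : (z : Fin n) ∈ σ' := by
          apply hreach _ hzσ
          exact this
        simpa using hzσ'
    exact ((key x hx').symm.trans (key y hy'))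
  have hdout : ∀ i ∈ σ', doutDeg G σ' i = doutDeg G σ i := by
    intro i hi
    rw [doutDeg_eq_card, doutDeg_eq_card]
    congr 1
    ext j
    simp only [Finset.mem_filter, Finset.mem_univ, true_and]
    constructor
    · rintro ⟨hj, hadj⟩
      refine ⟨fun hjσ => hj ?_, hadj⟩
      -- j ∈ σ adjacent to i ∈ σ' ⟹ j ∈ σ'
      obtain ⟨hiσ, hiσ2, hri⟩ := Finset.mem_filter.1 (hσ' ▸ hi)
      apply hreach _ hjσ
      exact hri.trans (SimpleGraph.Adj.reachable
        (show (G.induce (↑σ : Set (Fin n))).Adj ⟨i, by simpa using hiσ⟩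
          ⟨j, by simpa using hjσ⟩ from hadj))
    · rintro ⟨hj, hadj⟩
      exact ⟨fun hjσ' => hj (hsub hjσ'), hadj⟩
  obtain ⟨i, hi, hle⟩ := h σ' ⟨v, hvσ'⟩ hconn
  exact ⟨i, hsub hi, by rw [← hdout i hi]; exact hle⟩

end Component

section Cone

open Finset MvPolynomial

variable {n : ℕ} {G : SimpleGraph (Fin n)}

lemma cone_adj_some_none {i : Fin n} : (coneGraph G).Adj (some i) none := by
  rw [coneGraph, SimpleGraph.fromRel_adj]
  exact ⟨by simp, Or.inr (Or.inl rfl)⟩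

lemma cone_adj_some_some {i j : Fin n} :
    (coneGraph G).Adj (some i) (some j) ↔ G.Adj i j := by
  rw [coneGraph, SimpleGraph.fromRel_adj]
  constructor
  · rintro ⟨hne, h | h⟩
    · rcases h with h | ⟨i', j', hi, hj, hadj⟩
      · exact absurd h (by simp)
      · rw [Option.some_inj.1 hi, Option.some_inj.1 hj]
        exact hadj
    · rcases h with h | ⟨i', j', hi, hj, hadj⟩
      · exact absurd h (by simp)
      · rw [Option.some_inj.1 hi, Option.some_inj.1 hj]
        exact hadj.symm
  · intro h
    exact ⟨by simp [h.ne], Or.inl (Or.inr ⟨i, j, rfl, rfl, h⟩)⟩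

lemma cone_card (σ' : Finset (Fin n)) (i : Fin n) :
    ((nbr (coneGraph G) (some i)) \ σ'.image some).card
      = (Finset.univ.filter (fun j => j ∉ σ' ∧ G.Adj i j)).card + 1 := by
  classical
  have heq : (nbr (coneGraph G) (some i)) \ σ'.image some
      = insert none ((Finset.univ.filter (fun j => j ∉ σ' ∧ G.Adj i j)).image some) := by
    ext k
    rw [Finset.mem_sdiff, mem_nbr, Finset.mem_insert]
    cases k with
    | none =>
      constructor
      · intro _
        exact Or.inl rfl
      · intro _
        refine ⟨(coneGraph G).adj_symm (by exact (coneGraph G).adj_symm cone_adj_some_none), ?_⟩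
        rintro hmem
        obtain ⟨j, _, hj⟩ := Finset.mem_image.1 hmem
        exact absurd hj (by simp)
    | some j =>
      constructor
      · rintro ⟨hadj, hnot⟩
        refine Or.inr (Finset.mem_image.2 ⟨j, Finset.mem_filter.2
          ⟨Finset.mem_univ _, fun hj => hnot (Finset.mem_image.2 ⟨j, hj, rfl⟩),
            cone_adj_some_some.1 hadj⟩, rfl⟩)
      · rintro (h | h)
        · exact absurd h (by simp)
        · obtain ⟨j', hj', hjj⟩ := Finset.mem_image.1 h
          obtain rfl : j' = j := Option.some_inj.1 hjj
          obtain ⟨_, h1, h2⟩ := Finset.mem_filter.1 hj'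
          refine ⟨cone_adj_some_some.2 h2, fun hmem => ?_⟩
          obtain ⟨j'', hj'', hjj2⟩ := Finset.mem_image.1 hmem
          obtain rfl : j'' = j' := Option.some_inj.1 hjj2
          exact h1 hj''
  rw [heq, Finset.card_insert_of_notMem (by simp),
    Finset.card_image_of_injective _ (Option.some_injective _)]

/-- Extend a configuration on `Fin n` to the cone, placing `0` at the root. -/
def extO (a : Fin n → ℕ) : Option (Fin n) → ℕ := fun o => o.elim 0 a

lemma isPF_iff (a : Fin n → ℕ) :
    IsPF (coneGraph G) none (extO a) ↔
      ∀ σ : Finset (Fin n), σ.Nonempty → ∃ i ∈ σ, a i ≤ doutDeg G σ i := by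
  classical
  constructor
  · intro h σ hσ
    obtain ⟨o, ho, hlt⟩ := h.2 (σ.image some) (hσ.image _) (by simp)
    obtain ⟨i, hi, rfl⟩ := Finset.mem_image.1 ho
    refine ⟨i, hi, ?_⟩
    rw [doutDeg_eq_card]
    rw [cone_card] at hlt
    have : extO a (some i) = a i := rfl
    omega
  · intro h
    refine ⟨rfl, ?_⟩
    intro σ hσ hnone
    set σ' : Finset (Fin n) := Finset.univ.filter (fun i => some i ∈ σ) with hσ'def
    have hσσ' : σ = σ'.image some := by
      ext o
      cases o with
      | none => simp [hnone]
      | some j => simp [hσ'def]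
    have hσ'ne : σ'.Nonempty := by
      obtain ⟨o, ho⟩ := hσ
      cases o with
      | none => exact absurd ho hnone
      | some j => exact ⟨j, by simp [hσ'def]; exact ho⟩
    obtain ⟨i, hi, hle⟩ := h σ' hσ'ne
    refine ⟨some i, by rw [hσσ']; exact Finset.mem_image_of_mem _ hi, ?_⟩
    rw [hσσ', cone_card]
    rw [doutDeg_eq_card] at hle
    have : extO a (some i) = a i := rfl
    omega

variable (G) in
lemma stdmon_iff {K : Type*} [Field K] (a : Fin n → ℕ) :
    ((∏ i, (X i : MvPolynomial (Fin n) K) ^ a i) ∉ treeIdeal n G K) ↔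
      ∀ σ : Finset (Fin n), σ.Nonempty → ∃ i ∈ σ, a i ≤ doutDeg G σ i := by
  rw [mem_treeIdeal_iff]
  constructor
  · intro h
    apply connected_reduction a
    intro σ0 h1 h2
    by_contra hno
    push_neg at hno
    exact h ⟨σ0, h1, h2, fun j hj => by have := hno j hj; omega⟩
  · intro h hmem
    obtain ⟨σ, h1, h2, h3⟩ := hmem
    obtain ⟨i, hi, hle⟩ := h σ h1
    have := h3 i hi
    omega

end Cone


/-- the set of standard monomials of the tree ideal `T_G` is finite, and its
cardinality equals the number of spanning trees of the cone graph `G_r`. -/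
theorem stmt8 (n : ℕ) (G : SimpleGraph (Fin n)) (K : Type*) [Field K] :
    {a : Fin n → ℕ |
        (∏ i, (X i : MvPolynomial (Fin n) K) ^ a i) ∉ treeIdeal n G K}.Finite ∧
    {a : Fin n → ℕ |
        (∏ i, (X i : MvPolynomial (Fin n) K) ^ a i) ∉ treeIdeal n G K}.ncard =
      {T : SimpleGraph (Option (Fin n)) | T ≤ coneGraph G ∧ T.IsTree}.ncard := by
  classical
  constructor
  · apply Set.Finite.subset
      (Set.Finite.pi (fun i : Fin n => Set.finite_Iic (doutDeg G {i} i)))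
    intro a ha
    rw [Set.mem_setOf_eq, stdmon_iff] at ha
    intro i _
    obtain ⟨j, hj, hle⟩ := ha {i} ⟨i, Finset.mem_singleton_self i⟩
    rw [Finset.mem_singleton] at hj
    subst hj
    exact hle
  · rw [← Nat.card_coe_set_eq, ← Nat.card_coe_set_eq]
    apply Nat.card_congr
    have e1 : {a : Fin n → ℕ |
        (∏ i, (X i : MvPolynomial (Fin n) K) ^ a i) ∉ treeIdeal n G K} ≃
        {b : Option (Fin n) → ℕ // IsPF (coneGraph G) none b} := by
      refine
        { toFun := fun a => ⟨extO a.1, (isPF_iff a.1).2 ((stdmon_iff G a.1).1 a.2)⟩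
          invFun := fun b => ⟨fun i => b.1 (some i), ?_⟩
          left_inv := fun a => Subtype.ext rfl
          right_inv := fun b => Subtype.ext ?_ }
      · have hext : extO (fun i => b.1 (some i)) = b.1 := by
          funext o
          cases o with
          | none => exact b.2.1.symm
          | some j => rfl
        exact (stdmon_iff G _).2 ((isPF_iff _).1 (hext ▸ b.2))
      · funext o
        cases o with
        | none => exact b.2.1.symm
        | some j => rfl
    exact e1.trans ((pfEquiv (coneGraph G) none).trans (treeEquiv (coneGraph G) none))
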